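/- Let (u_L, v_L), (u_R, v_R) ∈ ℝ² with u_L²+v_L² < 1 and u_R²+v_R² < 1, and let W_i = 1/√(1-u_i²-v_i²) for i ∈ {L,R}. If W_L ≠ W_R, then ⟨W⟩² + (⟨u⟩⟨W⟩ - ⟨uW⟩)·⟨⟨u,v⟩⟩_Lx + (⟨v⟩⟨W⟩ - ⟨vW⟩)·⟨⟨u,v⟩⟩_Ly = W_L·W_R > 0, where ⟨⟨u,v⟩⟩_Lx = (u_L+u_R)(W_R-W_L)/((u_R²-u_L²)+(v_R²-v_L²)) and ⟨⟨u,v⟩⟩_Ly = (v_L+v_R)(W_R-W_L)/((u_R²-u_L²)+(v_R²-v_L²)), and ⟨x⟩ denotes the arithmetic mean of x_L and x_R. -/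
import Mathlib


open Real

/-- Positivity of the denominator in the 2D entropy conservative flux: with
2D Lorentz factors `W_i = 1/√(1-u_i²-v_i²)` and `W_L ≠ W_R`,
`⟨W⟩² + (⟨u⟩⟨W⟩-⟨uW⟩)·⟨⟨u,v⟩⟩_Lx + (⟨v⟩⟨W⟩-⟨vW⟩)·⟨⟨u,v⟩⟩_Ly = W_L W_R > 0`. -/
theorem Q2D_eq_WLWR_pos (uL vL uR vR : ℝ)
    (hL : uL ^ 2 + vL ^ 2 < 1) (hR : uR ^ 2 + vR ^ 2 < 1)
    (WL WR : ℝ) (hWL : WL = 1 / Real.sqrt (1 - uL ^ 2 - vL ^ 2))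
    (hWR : WR = 1 / Real.sqrt (1 - uR ^ 2 - vR ^ 2))
    (hne : WL ≠ WR)
    (Lx Ly : ℝ)
    (hLx : Lx = (uL + uR) * (WR - WL) / ((uR ^ 2 - uL ^ 2) + (vR ^ 2 - vL ^ 2)))
    (hLy : Ly = (vL + vR) * (WR - WL) / ((uR ^ 2 - uL ^ 2) + (vR ^ 2 - vL ^ 2))) :
    ((WL + WR) / 2) ^ 2 +
      ((uL + uR) / 2 * ((WL + WR) / 2) - (uL * WL + uR * WR) / 2) * Lx +
      ((vL + vR) / 2 * ((WL + WR) / 2) - (vL * WL + vR * WR) / 2) * Ly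
      = WL * WR ∧
    0 < WL * WR := by
  have haL : (0:ℝ) < 1 - uL ^ 2 - vL ^ 2 := by linarith
  have haR : (0:ℝ) < 1 - uR ^ 2 - vR ^ 2 := by linarith
  have hsL : 0 < Real.sqrt (1 - uL ^ 2 - vL ^ 2) := Real.sqrt_pos.mpr haL
  have hsR : 0 < Real.sqrt (1 - uR ^ 2 - vR ^ 2) := Real.sqrt_pos.mpr haR
  have hWLpos : 0 < WL := by rw [hWL]; positivity
  have hWRpos : 0 < WR := by rw [hWR]; positivity
  have hD : (uR ^ 2 - uL ^ 2) + (vR ^ 2 - vL ^ 2) ≠ 0 := by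
    intro h
    apply hne
    have : 1 - uL ^ 2 - vL ^ 2 = 1 - uR ^ 2 - vR ^ 2 := by linarith
    rw [hWL, hWR, this]
  refine ⟨?_, mul_pos hWLpos hWRpos⟩
  rw [hLx, hLy]
  field_simp
  ring
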